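/- Let (F, part, tg) be a p-PW-SAT instance and let determined, depth, setCounter, incCounter, countInit and countMonotone1 be the formulas defined below. Let K be a Kripke structure with a world w_0 such that K,w_0 ⊨ determined ∧ depth ∧ setCounter ∧ incCounter ∧ countInit ∧ countMonotone1. For j ∈ {0,…,n} and p ∈ {1,…,k} set T_p(j) := |{ℓ : 1 ≤ ℓ ≤ j, part(ℓ)=p, K,w_0 ⊨ q_ℓ}| and F_p(j) := |{ℓ : 1 ≤ ℓ ≤ j, part(ℓ)=p, K,w_0 ⊭ q_ℓ}|. Then for every path π ∈ Paths(w_0), every p ∈ {1,…,k} and every i with 1 ≤ i ≤ n+1 it holds that K,π(i) ⊨ tr_p^{T_p(i−1)} and K,π(i) ⊨ fl_p^{F_p(i−1)}. -/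
import Mathlib


/-- Syntax of CTL formulas over a type `V` of propositional variables. -/
inductive CTL (V : Type) : Type
  | tt : CTL V
  | ff : CTL V
  | var : V → CTL V
  | and : CTL V → CTL V → CTL V
  | or : CTL V → CTL V → CTL V
  | not : CTL V → CTL V
  | AX : CTL V → CTL V
  | EX : CTL V → CTL V
  | AF : CTL V → CTL V
  | EF : CTL V → CTL V
  | AG : CTL V → CTL V
  | EG : CTL V → CTL V
  | AU : CTL V → CTL V → CTL V
  | EU : CTL V → CTL V → CTL V
  deriving DecidableEq

/-- `φ → ψ` abbreviates `¬φ ∨ ψ`. -/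
def CTL.impl {V : Type} (φ ψ : CTL V) : CTL V := .or (.not φ) ψ

def bigAndList {V : Type} : List (CTL V) → CTL V
  | [] => .tt
  | φ :: l => .and φ (bigAndList l)

/-- Conjunction over `i ∈ {a, …, b}` (the empty conjunction `⊤` if `b < a`). -/
def conjIcc {V : Type} (a b : ℕ) (f : ℕ → CTL V) : CTL V :=
  bigAndList ((List.range' a (b + 1 - a)).map f)

/-- Conjunction over `i ∈ {0, …, c-1}`. -/
def conjRange {V : Type} (c : ℕ) (f : ℕ → CTL V) : CTL V :=
  bigAndList ((List.range c).map f)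

/-- A Kripke structure: a finite nonempty set of worlds, a total successor
relation, and a labeling of worlds with propositional variables. -/
structure Kripke (V : Type) : Type 1 where
  W : Type
  [instFin : Fintype W]
  [instNonempty : Nonempty W]
  R : W → W → Prop
  total : ∀ w, ∃ w', R w w'
  val : W → V → Prop

/-- A path is an infinite `R`-sequence of worlds. -/
def Kripke.IsPath {V : Type} (K : Kripke V) (π : ℕ → K.W) : Prop :=
  ∀ i, K.R (π i) (π (i + 1))

/-- Semantics of CTL: `Sat K φ w` means `K, w ⊨ φ`. -/
def Sat {V : Type} (K : Kripke V) : CTL V → K.W → Prop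
  | .tt, _ => True
  | .ff, _ => False
  | .var p, w => K.val w p
  | .and φ ψ, w => Sat K φ w ∧ Sat K ψ w
  | .or φ ψ, w => Sat K φ w ∨ Sat K ψ w
  | .not φ, w => ¬ Sat K φ w
  | .AX φ, w => ∀ π, K.IsPath π → π 0 = w → Sat K φ (π 1)
  | .EX φ, w => ∃ π, K.IsPath π ∧ π 0 = w ∧ Sat K φ (π 1)
  | .AF φ, w => ∀ π, K.IsPath π → π 0 = w → ∃ i, Sat K φ (π i)
  | .EF φ, w => ∃ π, K.IsPath π ∧ π 0 = w ∧ ∃ i, Sat K φ (π i)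
  | .AG φ, w => ∀ π, K.IsPath π → π 0 = w → ∀ i, Sat K φ (π i)
  | .EG φ, w => ∃ π, K.IsPath π ∧ π 0 = w ∧ ∀ i, Sat K φ (π i)
  | .AU φ ψ, w => ∀ π, K.IsPath π → π 0 = w →
      ∃ i, Sat K ψ (π i) ∧ ∀ j, j < i → Sat K φ (π j)
  | .EU φ ψ, w => ∃ π, K.IsPath π ∧ π 0 = w ∧
      ∃ i, Sat K ψ (π i) ∧ ∀ j, j < i → Sat K φ (π j)

/-- A formula is satisfiable if it holds at some world of some Kripke structure. -/
def CTL.Satisfiable {V : Type} (φ : CTL V) : Prop :=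
  ∃ (K : Kripke V) (w : K.W), Sat K φ w

/-- The propositional variables used in the p-PW-SAT reductions:
`q i`, `t p` (= t_{↑p}), `f p` (= f_{↑p}), `tr p j`, `fl p j`, `d i`, `m b`. -/
inductive PVar : Type
  | q : ℕ → PVar
  | t : ℕ → PVar
  | f : ℕ → PVar
  | tr : ℕ → ℕ → PVar
  | fl : ℕ → ℕ → PVar
  | d : ℕ → PVar
  | m : ℕ → PVar
  deriving DecidableEq

def vq (i : ℕ) : CTL PVar := .var (.q i)
def vt (p : ℕ) : CTL PVar := .var (.t p)
def vf (p : ℕ) : CTL PVar := .var (.f p)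
def vtr (p j : ℕ) : CTL PVar := .var (.tr p j)
def vfl (p j : ℕ) : CTL PVar := .var (.fl p j)
def vd (i : ℕ) : CTL PVar := .var (.d i)
def vm (b : ℕ) : CTL PVar := .var (.m b)

/-- A purely propositional formula (no CTL-operators). -/
def CTL.IsProp {V : Type} : CTL V → Prop
  | .tt => True
  | .ff => True
  | .var _ => True
  | .and φ ψ => φ.IsProp ∧ ψ.IsProp
  | .or φ ψ => φ.IsProp ∧ ψ.IsProp
  | .not φ => φ.IsProp
  | _ => False

/-- The set of variables occurring in a formula. -/
def CTL.vars {V : Type} : CTL V → Set V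
  | .tt => ∅
  | .ff => ∅
  | .var v => {v}
  | .and φ ψ => φ.vars ∪ ψ.vars
  | .or φ ψ => φ.vars ∪ ψ.vars
  | .not φ => φ.vars
  | .AX φ => φ.vars
  | .EX φ => φ.vars
  | .AF φ => φ.vars
  | .EF φ => φ.vars
  | .AG φ => φ.vars
  | .EG φ => φ.vars
  | .AU φ ψ => φ.vars ∪ ψ.vars
  | .EU φ ψ => φ.vars ∪ ψ.vars

/-- Evaluation of a propositional formula under a truth assignment
(temporal operators, which do not occur in propositional formulas, are
mapped to `False`). -/
def evalProp {V : Type} (a : V → Prop) : CTL V → Prop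
  | .tt => True
  | .ff => False
  | .var v => a v
  | .and φ ψ => evalProp a φ ∧ evalProp a ψ
  | .or φ ψ => evalProp a φ ∨ evalProp a ψ
  | .not φ => ¬ evalProp a φ
  | _ => False

/-- `n[p]`, the number of indices `i ∈ {1,…,n}` with `part i = p`. -/
def nP (n : ℕ) (part : ℕ → ℕ) (p : ℕ) : ℕ :=
  ((Finset.Icc 1 n).filter (fun i => part i = p)).card

/-- `(F, part, tg)` is a yes-instance of p-PW-SAT: some assignment to the
variables `q 1, …, q n` satisfies `F` and sets, for every part `p ∈ {1,…,k}`,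
exactly `tg p` of the variables of part `p` to true. -/
def YesInstance (n k : ℕ) (part : ℕ → ℕ) (tg : ℕ → ℕ) (F : CTL PVar) : Prop :=
  ∃ a : ℕ → Bool,
    evalProp (fun v => match v with | PVar.q i => a i = true | _ => False) F ∧
    ∀ p, 1 ≤ p → p ≤ k →
      ((Finset.Icc 1 n).filter (fun i => part i = p ∧ a i = true)).card = tg p

/- The relevant conjuncts of φ_F (as in the {AX,AG} reduction). -/

def determined (n : ℕ) : CTL PVar :=
  .AG (conjIcc 1 n (fun i =>
    .and ((vq i).impl (.AX (vq i))) ((CTL.not (vq i)).impl (.AX (.not (vq i))))))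

def depthForm (n : ℕ) : CTL PVar :=
  .AG (conjIcc 0 n (fun i =>
    (CTL.and (vd i) (.not (vd (i+1)))).impl (.AX (.and (vd (i+1)) (.not (vd (i+2)))))))

def setCounter (n : ℕ) (part : ℕ → ℕ) : CTL PVar :=
  .AG (conjIcc 1 n (fun i =>
    (CTL.and (vd i) (.not (vd (i+1)))).impl
      (.and ((vq i).impl (vt (part i))) ((CTL.not (vq i)).impl (vf (part i))))))

def incCounter (n k : ℕ) (part : ℕ → ℕ) : CTL PVar :=
  .AG (conjIcc 1 k (fun p => conjIcc 0 (nP n part p) (fun j =>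
    .and ((vt p).impl ((vtr p j).impl (.AX (vtr p (j+1)))))
         ((vf p).impl ((vfl p j).impl (.AX (vfl p (j+1))))))))

def countInit (k : ℕ) : CTL PVar :=
  .and (.and (vd 0) (.not (vd 1)))
       (.AG (conjIcc 1 k (fun p => .and (vtr p 0) (vfl p 0))))

def countMonotone1 (n k : ℕ) (part : ℕ → ℕ) : CTL PVar :=
  .AG (conjIcc 1 k (fun p => conjIcc 0 (nP n part p) (fun j =>
    .and ((vtr p j).impl (.AG (vtr p j))) ((vfl p j).impl (.AG (vfl p j))))))

/-- `T_p(j)`: the number of `ℓ ∈ {1,…,j}` of part `p` whose variable `q ℓ`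
is true at `w₀`. -/
noncomputable def Tcount (K : Kripke PVar) (w0 : K.W) (part : ℕ → ℕ) (p j : ℕ) : ℕ :=
  Set.ncard {ℓ : ℕ | 1 ≤ ℓ ∧ ℓ ≤ j ∧ part ℓ = p ∧ K.val w0 (PVar.q ℓ)}

/-- `F_p(j)`: the number of `ℓ ∈ {1,…,j}` of part `p` whose variable `q ℓ`
is false at `w₀`. -/
noncomputable def Fcount (K : Kripke PVar) (w0 : K.W) (part : ℕ → ℕ) (p j : ℕ) : ℕ :=
  Set.ncard {ℓ : ℕ | 1 ≤ ℓ ∧ ℓ ≤ j ∧ part ℓ = p ∧ ¬ K.val w0 (PVar.q ℓ)}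


section Helpers

lemma sat_bigAndList {V : Type} {K : Kripke V} {L : List (CTL V)} {w : K.W}
    (h : Sat K (bigAndList L) w) : ∀ φ ∈ L, Sat K φ w := by
  induction L with
  | nil => simp
  | cons a l ih =>
    intro φ hφ
    rcases List.mem_cons.1 hφ with rfl | hl
    · exact h.1
    · exact ih h.2 φ hl

lemma sat_conjIcc {V : Type} {K : Kripke V} {a b : ℕ} {f : ℕ → CTL V} {w : K.W}
    (h : Sat K (conjIcc a b f) w) {i : ℕ} (h1 : a ≤ i) (h2 : i ≤ b) :
    Sat K (f i) w := by
  apply sat_bigAndList h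
  rw [List.mem_map]
  exact ⟨i, List.mem_range'_1.2 ⟨h1, by omega⟩, rfl⟩

lemma shift_isPath {V : Type} {K : Kripke V} {π : ℕ → K.W} (h : K.IsPath π) (i : ℕ) :
    K.IsPath (fun j => π (i + j)) := by
  intro j
  simpa [Nat.add_assoc] using h (i + j)

/-- From `AG φ` at the start of a path, `φ` holds everywhere on the path. -/
lemma sat_AG_on_path {V : Type} {K : Kripke V} {φ : CTL V} {w : K.W}
    (h : Sat K (.AG φ) w) {π : ℕ → K.W} (hπ : K.IsPath π) (h0 : π 0 = w) (i : ℕ) :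
    Sat K φ (π i) := h π hπ h0 i

lemma sat_AX_next {V : Type} {K : Kripke V} {φ : CTL V} {π : ℕ → K.W}
    (hπ : K.IsPath π) (i : ℕ) (h : Sat K (.AX φ) (π i)) : Sat K φ (π (i + 1)) := by
  have := h (fun j => π (i + j)) (shift_isPath hπ i) rfl
  simpa using this

lemma sat_impl {V : Type} {K : Kripke V} {φ ψ : CTL V} {w : K.W}
    (h : Sat K (φ.impl ψ) w) (hφ : Sat K φ w) : Sat K ψ w := by
  rcases h with h | h
  · exact absurd hφ h
  · exact h

lemma Tcount_finite (K : Kripke PVar) (w0 : K.W) (part : ℕ → ℕ) (p j : ℕ) :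
    {ℓ : ℕ | 1 ≤ ℓ ∧ ℓ ≤ j ∧ part ℓ = p ∧ K.val w0 (PVar.q ℓ)}.Finite :=
  (Set.finite_Icc 1 j).subset (fun ℓ hℓ => Set.mem_Icc.2 ⟨hℓ.1, hℓ.2.1⟩)

lemma Fcount_finite (K : Kripke PVar) (w0 : K.W) (part : ℕ → ℕ) (p j : ℕ) :
    {ℓ : ℕ | 1 ≤ ℓ ∧ ℓ ≤ j ∧ part ℓ = p ∧ ¬ K.val w0 (PVar.q ℓ)}.Finite :=
  (Set.finite_Icc 1 j).subset (fun ℓ hℓ => Set.mem_Icc.2 ⟨hℓ.1, hℓ.2.1⟩)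

lemma Tcount_zero (K : Kripke PVar) (w0 : K.W) (part : ℕ → ℕ) (p : ℕ) :
    Tcount K w0 part p 0 = 0 := by
  unfold Tcount
  convert Set.ncard_empty ℕ
  ext ℓ; simp; omega

lemma Fcount_zero (K : Kripke PVar) (w0 : K.W) (part : ℕ → ℕ) (p : ℕ) :
    Fcount K w0 part p 0 = 0 := by
  unfold Fcount
  convert Set.ncard_empty ℕ
  ext ℓ; simp; omega

lemma Tcount_succ_pos (K : Kripke PVar) (w0 : K.W) (part : ℕ → ℕ) (p i : ℕ)
    (hi : 1 ≤ i) (hp : part i = p) (hq : K.val w0 (PVar.q i)) :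
    Tcount K w0 part p i = Tcount K w0 part p (i - 1) + 1 := by
  unfold Tcount
  have hset : {ℓ : ℕ | 1 ≤ ℓ ∧ ℓ ≤ i ∧ part ℓ = p ∧ K.val w0 (PVar.q ℓ)} =
      insert i {ℓ : ℕ | 1 ≤ ℓ ∧ ℓ ≤ i - 1 ∧ part ℓ = p ∧ K.val w0 (PVar.q ℓ)} := by
    ext ℓ
    simp only [Set.mem_setOf_eq, Set.mem_insert_iff]
    constructor
    · rintro ⟨h1, h2, h3, h4⟩
      by_cases hℓ : ℓ = i
      · exact Or.inl hℓ
      · exact Or.inr ⟨h1, by omega, h3, h4⟩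
    · rintro (rfl | ⟨h1, h2, h3, h4⟩)
      · exact ⟨hi, le_rfl, hp, hq⟩
      · exact ⟨h1, by omega, h3, h4⟩
  rw [hset, Set.ncard_insert_of_notMem (by simp; omega) (Tcount_finite K w0 part p (i-1))]

lemma Tcount_succ_neg (K : Kripke PVar) (w0 : K.W) (part : ℕ → ℕ) (p i : ℕ)
    (hi : 1 ≤ i) (hnp : ¬ (part i = p ∧ K.val w0 (PVar.q i))) :
    Tcount K w0 part p i = Tcount K w0 part p (i - 1) := by
  unfold Tcount
  congr 1
  ext ℓ
  simp only [Set.mem_setOf_eq]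
  constructor
  · rintro ⟨h1, h2, h3, h4⟩
    refine ⟨h1, ?_, h3, h4⟩
    by_cases hℓ : ℓ = i
    · subst hℓ; exact absurd ⟨h3, h4⟩ hnp
    · omega
  · rintro ⟨h1, h2, h3, h4⟩
    exact ⟨h1, by omega, h3, h4⟩

lemma Fcount_succ_pos (K : Kripke PVar) (w0 : K.W) (part : ℕ → ℕ) (p i : ℕ)
    (hi : 1 ≤ i) (hp : part i = p) (hq : ¬ K.val w0 (PVar.q i)) :
    Fcount K w0 part p i = Fcount K w0 part p (i - 1) + 1 := by
  unfold Fcount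
  have hset : {ℓ : ℕ | 1 ≤ ℓ ∧ ℓ ≤ i ∧ part ℓ = p ∧ ¬ K.val w0 (PVar.q ℓ)} =
      insert i {ℓ : ℕ | 1 ≤ ℓ ∧ ℓ ≤ i - 1 ∧ part ℓ = p ∧ ¬ K.val w0 (PVar.q ℓ)} := by
    ext ℓ
    simp only [Set.mem_setOf_eq, Set.mem_insert_iff]
    constructor
    · rintro ⟨h1, h2, h3, h4⟩
      by_cases hℓ : ℓ = i
      · exact Or.inl hℓ
      · exact Or.inr ⟨h1, by omega, h3, h4⟩
    · rintro (rfl | ⟨h1, h2, h3, h4⟩)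
      · exact ⟨hi, le_rfl, hp, hq⟩
      · exact ⟨h1, by omega, h3, h4⟩
  rw [hset, Set.ncard_insert_of_notMem (by simp; omega) (Fcount_finite K w0 part p (i-1))]

lemma Fcount_succ_neg (K : Kripke PVar) (w0 : K.W) (part : ℕ → ℕ) (p i : ℕ)
    (hi : 1 ≤ i) (hnp : ¬ (part i = p ∧ ¬ K.val w0 (PVar.q i))) :
    Fcount K w0 part p i = Fcount K w0 part p (i - 1) := by
  unfold Fcount
  congr 1
  ext ℓ
  simp only [Set.mem_setOf_eq]
  constructor
  · rintro ⟨h1, h2, h3, h4⟩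
    refine ⟨h1, ?_, h3, h4⟩
    by_cases hℓ : ℓ = i
    · subst hℓ; exact absurd ⟨h3, h4⟩ hnp
    · omega
  · rintro ⟨h1, h2, h3, h4⟩
    exact ⟨h1, by omega, h3, h4⟩

lemma Tcount_le_nP (K : Kripke PVar) (w0 : K.W) (n : ℕ) (part : ℕ → ℕ) (p j : ℕ)
    (hj : j ≤ n) : Tcount K w0 part p j ≤ nP n part p := by
  unfold Tcount nP
  rw [← Set.ncard_coe_finset]
  apply Set.ncard_le_ncard _ (Set.toFinite _)
  intro ℓ hℓ
  simp only [Finset.coe_filter, Set.mem_setOf_eq, Finset.mem_Icc]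
  exact ⟨⟨hℓ.1, le_trans hℓ.2.1 hj⟩, hℓ.2.2.1⟩

lemma Fcount_le_nP (K : Kripke PVar) (w0 : K.W) (n : ℕ) (part : ℕ → ℕ) (p j : ℕ)
    (hj : j ≤ n) : Fcount K w0 part p j ≤ nP n part p := by
  unfold Fcount nP
  rw [← Set.ncard_coe_finset]
  apply Set.ncard_le_ncard _ (Set.toFinite _)
  intro ℓ hℓ
  simp only [Finset.coe_filter, Set.mem_setOf_eq, Finset.mem_Icc]
  exact ⟨⟨hℓ.1, le_trans hℓ.2.1 hj⟩, hℓ.2.2.1⟩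

end Helpers

/-- Along any path from `w₀`, at time `i ∈ {1,…,n+1}` the true-counter of part
`p` has reached at least `T_p(i−1)` and the false-counter at least `F_p(i−1)`. -/
theorem statement11 (n k : ℕ) (part tg : ℕ → ℕ)
    (hpart : ∀ i, 1 ≤ i → i ≤ n → 1 ≤ part i ∧ part i ≤ k)
    (F : CTL PVar) (hF : F.IsProp)
    (hvars : ∀ v ∈ F.vars, ∃ i, 1 ≤ i ∧ i ≤ n ∧ v = PVar.q i)
    (K : Kripke PVar) (w0 : K.W)
    (h : Sat K (.and (determined n) (.and (depthForm n) (.and (setCounter n part)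
          (.and (incCounter n k part)
            (.and (countInit k) (countMonotone1 n k part)))))) w0) :
    ∀ π, K.IsPath π → π 0 = w0 →
      ∀ p, 1 ≤ p → p ≤ k → ∀ i, 1 ≤ i → i ≤ n + 1 →
        Sat K (vtr p (Tcount K w0 part p (i-1))) (π i) ∧
        Sat K (vfl p (Fcount K w0 part p (i-1))) (π i) := by
  obtain ⟨hdet, hdepth, hset, hinc, hinit, hmono⟩ := h
  intro π hπ hπ0 p hp1 hpk
  -- q-variables are constant along the path
  have hq_const : ∀ ℓ, 1 ≤ ℓ → ℓ ≤ n → ∀ i,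
      (Sat K (vq ℓ) (π i) ↔ K.val w0 (PVar.q ℓ)) := by
    intro ℓ hℓ1 hℓn i
    induction i with
    | zero => rw [hπ0]; exact Iff.rfl
    | succ i ih =>
      have hd := sat_conjIcc (hdet π hπ hπ0 i) hℓ1 hℓn
      constructor
      · intro hqi
        by_contra hw0
        have hnq : Sat K (CTL.not (vq ℓ)) (π i) := fun hc => hw0 (ih.1 hc)
        have := sat_AX_next hπ i (sat_impl hd.2 hnq)
        exact this hqi
      · intro hw0
        have hq : Sat K (vq ℓ) (π i) := ih.2 hw0
        exact sat_AX_next hπ i (sat_impl hd.1 hq)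
  -- depth: d_i ∧ ¬d_{i+1} holds at π i for i ≤ n+1
  have hd_at : ∀ i, i ≤ n + 1 →
      Sat K (CTL.and (vd i) (.not (vd (i+1)))) (π i) := by
    intro i
    induction i with
    | zero => intro _; rw [hπ0]; exact hinit.1
    | succ i ih =>
      intro hin
      have hprev := ih (by omega)
      have hc := sat_conjIcc (hdepth π hπ hπ0 i) (Nat.zero_le i) (by omega)
      exact sat_AX_next hπ i (sat_impl hc hprev)
  -- counters hold at position i (target statement, strengthened form)
  intro i
  induction i with
  | zero => intro h1 _; omega
  | succ i ih =>
    intro _ hin1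
    rcases Nat.eq_zero_or_pos i with rfl | hi1
    · -- base case i+1 = 1
      simp only [Nat.add_sub_cancel, Tcount_zero, Fcount_zero]
      have hc := sat_conjIcc (hinit.2 π hπ hπ0 1) hp1 hpk
      exact ⟨hc.1, hc.2⟩
    · -- inductive step: 1 ≤ i ≤ n
      have hin : i ≤ n := by omega
      obtain ⟨htr, hfl⟩ := ih hi1 (by omega)
      have hT_le : Tcount K w0 part p (i - 1) ≤ nP n part p :=
        Tcount_le_nP K w0 n part p (i-1) (by omega)
      have hF_le : Fcount K w0 part p (i - 1) ≤ nP n part p :=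
        Fcount_le_nP K w0 n part p (i-1) (by omega)
      -- monotone: counter values persist to π (i+1)
      have hmono_at := sat_conjIcc (hmono π hπ hπ0 i) hp1 hpk
      have htr_next : Sat K (vtr p (Tcount K w0 part p (i-1))) (π (i+1)) := by
        have hc := (sat_conjIcc hmono_at (Nat.zero_le _) hT_le).1
        have hAG := sat_impl hc htr
        have := hAG (fun j => π (i + j)) (shift_isPath hπ i) rfl 1
        simpa using this
      have hfl_next : Sat K (vfl p (Fcount K w0 part p (i-1))) (π (i+1)) := by
        have hc := (sat_conjIcc hmono_at (Nat.zero_le _) hF_le).2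
        have hAG := sat_impl hc hfl
        have := hAG (fun j => π (i + j)) (shift_isPath hπ i) rfl 1
        simpa using this
      -- increment via incCounter if needed
      have hinc_at := sat_conjIcc (hinc π hπ hπ0 i) hp1 hpk
      simp only [Nat.add_sub_cancel]
      -- depth holds at π i so setCounter applies
      have hdep_i := hd_at i (by omega)
      have hsc := sat_impl (sat_conjIcc (hset π hπ hπ0 i) hi1 hin) hdep_i
      constructor
      · by_cases hcase : part i = p ∧ K.val w0 (PVar.q i)
        · rw [Tcount_succ_pos K w0 part p i hi1 hcase.1 hcase.2]
          have hqi : Sat K (vq i) (π i) := (hq_const i hi1 hin i).2 hcase.2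
          have ht : Sat K (vt p) (π i) := hcase.1 ▸ sat_impl hsc.1 hqi
          have hc := (sat_conjIcc hinc_at (Nat.zero_le _) hT_le).1
          exact sat_AX_next hπ i (sat_impl (sat_impl hc ht) htr)
        · rw [Tcount_succ_neg K w0 part p i hi1 hcase]
          exact htr_next
      · by_cases hcase : part i = p ∧ ¬ K.val w0 (PVar.q i)
        · rw [Fcount_succ_pos K w0 part p i hi1 hcase.1 hcase.2]
          have hqi : Sat K (CTL.not (vq i)) (π i) :=
            fun hc => hcase.2 ((hq_const i hi1 hin i).1 hc)
          have hf : Sat K (vf p) (π i) := hcase.1 ▸ sat_impl hsc.2 hqi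
          have hc := (sat_conjIcc hinc_at (Nat.zero_le _) hF_le).2
          exact sat_AX_next hπ i (sat_impl (sat_impl hc hf) hfl)
        · rw [Fcount_succ_neg K w0 part p i hi1 hcase]
          exact hfl_next
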